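/- arXiv:1603.01498 — 2 statements merged into one kernel-verified Lean document; each statement's English description precedes it below -/
import Mathlib

section
/- Euler's identity: ζ(2,1) = ζ(3), i.e. the double sum ∑_{k>l≥1} 1/(k² l) equals ∑_{k≥1} 1/k³. -/
open Finset Filter Topology


/-- Harmonic number as a real. -/
noncomputable def Hr (n : ℕ) : ℝ := ∑ i ∈ Finset.range n, 1 / ((i : ℝ) + 1)

lemma Hr_succ (n : ℕ) : Hr (n + 1) = Hr n + 1 / ((n : ℝ) + 1) := by
  simp [Hr, Finset.sum_range_succ]

lemma Hr_nonneg (n : ℕ) : 0 ≤ Hr n :=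
  Finset.sum_nonneg fun i _ => by positivity

lemma Hr_le_two_sqrt (n : ℕ) : Hr n ≤ 2 * Real.sqrt n := by
  induction n with
  | zero => simp [Hr]
  | succ n ih =>
    rw [Hr_succ]
    set u := Real.sqrt ((n : ℝ) + 1) with hu
    set v := Real.sqrt (n : ℝ) with hv
    have hu2 : u ^ 2 = (n : ℝ) + 1 := Real.sq_sqrt (by positivity)
    have hv2 : v ^ 2 = (n : ℝ) := Real.sq_sqrt (by positivity)
    have hu0 : 0 ≤ u := Real.sqrt_nonneg _
    have hv0 : 0 ≤ v := Real.sqrt_nonneg _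
    have hu1 : 1 ≤ u := by
      nlinarith [hu2, hu0]
    have hvu : v ≤ u := Real.sqrt_le_sqrt (by push_cast; linarith)
    have hgoal : 1 / ((n : ℝ) + 1) ≤ 2 * (u - v) := by
      rw [div_le_iff₀ (by positivity)]
      nlinarith [mul_nonneg (sub_nonneg.2 hvu) (sub_nonneg.2 hu1), sq_nonneg (u - v),
        mul_nonneg hu0 hv0]
    have : Real.sqrt ((n:ℕ)+1 : ℕ) = u := by rw [hu]; norm_cast
    rw [this]
    linarith


/-- summability of 1/(n+1)^2 -/
lemma sum_inv_sq : Summable (fun n : ℕ => 1 / ((n : ℝ) + 1) ^ 2) := by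
  have h := (Real.summable_one_div_nat_pow (p := 2)).2 (by norm_num)
  have := (summable_nat_add_iff (f := fun n : ℕ => 1 / (n : ℝ) ^ 2) 1).2 h
  refine this.congr fun n => ?_
  push_cast; ring

lemma sum_inv_cube : Summable (fun n : ℕ => 1 / ((n : ℝ) + 1) ^ 3) := by
  have h := (Real.summable_one_div_nat_pow (p := 3)).2 (by norm_num)
  have := (summable_nat_add_iff (f := fun n : ℕ => 1 / (n : ℝ) ^ 3) 1).2 h
  refine this.congr fun n => ?_
  push_cast; ring

lemma sum_rpow32 : Summable (fun n : ℕ => ((n : ℝ) + 1) ^ (-(3/2) : ℝ)) := by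
  have h := (Real.summable_nat_rpow (p := (-(3/2) : ℝ))).2 (by norm_num)
  have := (summable_nat_add_iff (f := fun n : ℕ => (n : ℝ) ^ (-(3/2) : ℝ)) 1).2 h
  refine this.congr fun n => ?_
  push_cast; ring_nf

/-- Fiber summability. -/
lemma fiber_summable (m : ℕ) :
    Summable (fun n : ℕ => 1 / (((n : ℝ) + 1) * ((n : ℝ) + (m : ℝ) + 2))) := by
  refine Summable.of_nonneg_of_le (fun n => by positivity) (fun n => ?_) sum_inv_sq
  have h1 : (0:ℝ) < (n : ℝ) + 1 := by positivity
  rw [div_le_div_iff₀ (by positivity) (by positivity)]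
  have hm : (0:ℝ) ≤ (m:ℝ) := Nat.cast_nonneg m
  have : ((n:ℝ)+1) ≤ (n:ℝ) + (m:ℝ) + 2 := by linarith
  nlinarith

/-- The telescoping identity: key analytic lemma. -/
lemma claimA (m : ℕ) :
    HasSum (fun n : ℕ => 1 / (((n : ℝ) + 1) * ((n : ℝ) + (m : ℝ) + 2)))
      (Hr (m + 1) / ((m : ℝ) + 1)) := by
  have hsum := fiber_summable m
  rw [hsum.hasSum_iff_tendsto_nat]
  have key : ∀ N : ℕ, ∑ n ∈ range N, 1 / (((n : ℝ) + 1) * ((n : ℝ) + (m : ℝ) + 2))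
      = (1 / ((m : ℝ) + 1)) * (Hr (m + 1) - ∑ i ∈ range (m + 1), 1 / ((N : ℝ) + (i : ℝ) + 1)) := by
    intro N
    have step : ∀ n : ℕ, 1 / (((n : ℝ) + 1) * ((n : ℝ) + (m : ℝ) + 2))
        = (1 / ((m : ℝ) + 1)) * (1 / ((n : ℝ) + 1) - 1 / ((n : ℝ) + (m : ℝ) + 2)) := by
      intro n
      have h1 : ((n:ℝ)+1) ≠ 0 := by positivity
      have h2 : ((n:ℝ)+(m:ℝ)+2) ≠ 0 := by positivity
      have h3 : ((m:ℝ)+1) ≠ 0 := by positivity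
      field_simp
      ring
    rw [Finset.sum_congr rfl (fun n _ => step n), ← Finset.mul_sum]
    congr 1
    rw [Finset.sum_sub_distrib]
    have e1 : ∑ n ∈ range N, (1:ℝ) / ((n : ℝ) + 1) = Hr N := rfl
    have e2 : ∑ n ∈ range N, (1:ℝ) / ((n : ℝ) + (m : ℝ) + 2) = Hr (m + 1 + N) - Hr (m + 1) := by
      have := Finset.sum_range_add (fun i => 1 / ((i : ℝ) + 1)) (m + 1) N
      have h : ∀ x : ℕ, (1:ℝ) / (((m + 1 + x : ℕ) : ℝ) + 1) = 1 / ((x : ℝ) + (m : ℝ) + 2) := by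
        intro x; push_cast; ring_nf
      rw [Finset.sum_congr rfl (fun x _ => h x)] at this
      have : Hr (m + 1 + N) = Hr (m + 1) + ∑ x ∈ range N, (1:ℝ) / ((x : ℝ) + (m : ℝ) + 2) := this
      linarith
    have e3 : Hr (m + 1 + N) = Hr N + ∑ i ∈ range (m + 1), (1:ℝ) / ((N : ℝ) + (i : ℝ) + 1) := by
      have := Finset.sum_range_add (fun i => 1 / ((i : ℝ) + 1)) N (m + 1)
      have h : ∀ x : ℕ, (1:ℝ) / (((N + x : ℕ) : ℝ) + 1) = 1 / ((N : ℝ) + (x : ℝ) + 1) := by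
        intro x; push_cast; ring_nf
      rw [Finset.sum_congr rfl (fun x _ => h x)] at this
      rw [show m + 1 + N = N + (m + 1) by omega]
      exact this
    rw [e1, e2]
    linarith [e3]
  simp only [key]
  have hlim : Tendsto (fun N : ℕ => ∑ i ∈ range (m + 1), 1 / ((N : ℝ) + (i : ℝ) + 1))
      atTop (𝓝 0) := by
    have : Tendsto (fun N : ℕ => ∑ i ∈ range (m + 1), 1 / ((N : ℝ) + (i : ℝ) + 1))
        atTop (𝓝 (∑ i ∈ range (m + 1), (0:ℝ))) := by
      refine tendsto_finset_sum _ fun i _ => ?_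
      have h := tendsto_one_div_add_atTop_nhds_zero_nat (𝕜 := ℝ)
      -- 1/(N + i + 1) → 0 : compare with 1/(N+1)
      have h2 : Tendsto (fun N : ℕ => ((N : ℝ) + (i:ℝ) + 1)) atTop atTop := by
        simpa [add_assoc] using tendsto_atTop_add_const_right atTop ((i:ℝ)+1)
          (tendsto_natCast_atTop_atTop (R := ℝ))
      simpa [one_div, Pi.inv_def] using h2.inv_tendsto_atTop
    simpa using this
  have : Tendsto (fun N : ℕ => (1 / ((m : ℝ) + 1)) *
      (Hr (m + 1) - ∑ i ∈ range (m + 1), 1 / ((N : ℝ) + (i : ℝ) + 1)))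
      atTop (𝓝 ((1 / ((m : ℝ) + 1)) * (Hr (m + 1) - 0))) :=
    (tendsto_const_nhds.sub hlim).const_mul _
  simpa [div_eq_mul_inv, mul_comm] using this

noncomputable def sA (m : ℕ) : ℝ := Hr (m + 1) / ((m : ℝ) + 1) ^ 2
noncomputable def tB (m : ℕ) : ℝ := Hr (m + 1) / ((m : ℝ) + 2) ^ 2
noncomputable def A (p : ℕ × ℕ) : ℝ :=
  1 / (((p.1 : ℝ) + 1) * ((p.2 : ℝ) + 1) * ((p.1 : ℝ) + (p.2 : ℝ) + 2))
noncomputable def B (p : ℕ × ℕ) : ℝ :=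
  1 / ((((p.1 : ℝ) + (p.2 : ℝ) + 2)) ^ 2 * ((p.2 : ℝ) + 1))

lemma A_nonneg (p : ℕ × ℕ) : 0 ≤ A p := by unfold A; positivity
lemma B_nonneg (p : ℕ × ℕ) : 0 ≤ B p := by unfold B; positivity

lemma fiberA (m : ℕ) : HasSum (fun n => A (m, n)) (sA m) := by
  have h := (claimA m).mul_left (1 / ((m : ℝ) + 1))
  have e1 : (fun n : ℕ => 1 / ((m : ℝ) + 1) * (1 / (((n : ℝ) + 1) * ((n : ℝ) + (m : ℝ) + 2))))
      = fun n => A (m, n) := by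
    funext n
    rw [one_div_mul_one_div]
    unfold A
    ring_nf
  have e2 : 1 / ((m : ℝ) + 1) * (Hr (m + 1) / ((m : ℝ) + 1)) = sA m := by
    unfold sA; rw [div_mul_div_comm, one_mul]; ring_nf
  rw [e1, e2] at h
  exact h

lemma summable_sA : Summable sA := by
  refine Summable.of_nonneg_of_le
    (fun m => div_nonneg (Hr_nonneg _) (by positivity)) (fun m => ?_)
    (sum_rpow32.mul_left 2)
  set x : ℝ := (m : ℝ) + 1 with hx
  have hx0 : (0:ℝ) < x := by positivity
  have hH : Hr (m + 1) ≤ 2 * Real.sqrt x := by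
    have := Hr_le_two_sqrt (m + 1)
    rwa [show (((m+1 : ℕ)) : ℝ) = x by push_cast [hx]; ring] at this
  have hkey : Real.sqrt x / x ^ 2 = x ^ (-(3/2) : ℝ) := by
    rw [Real.sqrt_eq_rpow, show (x ^ 2 : ℝ) = x ^ ((2:ℕ) : ℝ) from (Real.rpow_natCast x 2).symm,
      ← Real.rpow_sub hx0]
    norm_num
  have hle : sA m ≤ 2 * Real.sqrt x / x ^ 2 := by
    show Hr (m + 1) / x ^ 2 ≤ 2 * Real.sqrt x / x ^ 2
    gcongr
  calc sA m ≤ 2 * Real.sqrt x / x ^ 2 := hle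
    _ = 2 * (x ^ (-(3/2) : ℝ)) := by rw [mul_div_assoc, hkey]

lemma summable_A : Summable A := by
  rw [summable_prod_of_nonneg A_nonneg]
  refine ⟨fun m => (fiberA m).summable, ?_⟩
  refine summable_sA.congr fun m => ?_
  exact ((fiberA m).tsum_eq).symm

lemma tsum_A_eq : ∑' p, A p = ∑' m, sA m := by
  rw [Summable.tsum_prod' summable_A fun m => (fiberA m).summable]
  exact tsum_congr fun m => (fiberA m).tsum_eq

lemma A_eq_B_add (p : ℕ × ℕ) : A p = B p + B p.swap := by
  obtain ⟨m, n⟩ := p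
  unfold A B
  simp only [Prod.swap, Prod.fst, Prod.snd]
  have h1 : ((m:ℝ)+1) ≠ 0 := by positivity
  have h2 : ((n:ℝ)+1) ≠ 0 := by positivity
  have h3 : ((m:ℝ)+(n:ℝ)+2) ≠ 0 := by positivity
  have h4 : ((n:ℝ)+(m:ℝ)+2) ≠ 0 := by positivity
  field_simp
  ring

lemma B_le_A (p : ℕ × ℕ) : B p ≤ A p := by
  obtain ⟨m, n⟩ := p
  unfold A B
  have hm : (0:ℝ) ≤ (m:ℝ) := Nat.cast_nonneg m
  have hn : (0:ℝ) ≤ (n:ℝ) := Nat.cast_nonneg n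
  dsimp only
  apply one_div_le_one_div_of_le (by positivity)
  nlinarith [mul_nonneg (mul_nonneg hm hn) hn, mul_nonneg hm hn, mul_nonneg hn hn]

lemma summable_B : Summable B :=
  Summable.of_nonneg_of_le B_nonneg B_le_A summable_A

lemma summable_Bswap : Summable (fun p : ℕ × ℕ => B p.swap) :=
  ((Equiv.prodComm ℕ ℕ).summable_iff (f := B)).2 summable_B

lemma tsum_Bswap : ∑' p : ℕ × ℕ, B p.swap = ∑' p, B p :=
  (Equiv.prodComm ℕ ℕ).tsum_eq B

lemma tsum_A_eq_two_B : ∑' p, A p = 2 * ∑' p, B p := by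
  calc ∑' p, A p = ∑' p : ℕ × ℕ, (B p + B p.swap) := tsum_congr A_eq_B_add
    _ = (∑' p, B p) + ∑' p : ℕ × ℕ, B p.swap := Summable.tsum_add summable_B summable_Bswap
    _ = 2 * ∑' p, B p := by rw [tsum_Bswap]; ring

lemma summable_tB : Summable tB := by
  refine Summable.of_nonneg_of_le (fun m => div_nonneg (Hr_nonneg _) (by positivity))
    (fun m => ?_) summable_sA
  unfold tB sA
  gcongr
  · exact Hr_nonneg _
  · linarith

noncomputable def eProd : ℕ × ℕ ≃ {p : ℕ × ℕ // p.2 < p.1 ∧ 1 ≤ p.2} where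
  toFun q := ⟨(q.1 + q.2 + 2, q.2 + 1), by omega⟩
  invFun p := (p.1.1 - p.1.2 - 1, p.1.2 - 1)
  left_inv q := by
    obtain ⟨m, n⟩ := q
    simp only [Prod.mk.injEq]
    omega
  right_inv p := by
    obtain ⟨⟨k, l⟩, h⟩ := p
    apply Subtype.ext
    simp only [Prod.mk.injEq]
    omega

noncomputable def eSig : (Σ m : ℕ, Fin (m + 1)) ≃ {p : ℕ × ℕ // p.2 < p.1 ∧ 1 ≤ p.2} where
  toFun x := ⟨(x.1 + 2, (x.2 : ℕ) + 1), by have := x.2.isLt; constructor <;> omega⟩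
  invFun p := ⟨p.1.1 - 2, ⟨p.1.2 - 1, by have := p.2; omega⟩⟩
  left_inv x := rfl
  right_inv p := by
    obtain ⟨⟨k, l⟩, h⟩ := p
    apply Subtype.ext
    simp only [Prod.mk.injEq]
    omega

noncomputable def eNat : ℕ ≃ {k : ℕ // 1 ≤ k} where
  toFun n := ⟨n + 1, by omega⟩
  invFun k := (k : ℕ) - 1
  left_inv n := rfl
  right_inv k := by
    apply Subtype.ext
    show (k : ℕ) - 1 + 1 = (k : ℕ)
    have := k.2; omega

noncomputable def vB (m : ℕ) : ℝ := Hr m / ((m : ℝ) + 1) ^ 2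

lemma vB_succ_eq_tB : (fun m => vB (m + 1)) = tB := by
  funext m
  unfold vB tB
  push_cast
  ring_nf

lemma summable_vB : Summable vB :=
  (summable_nat_add_iff 1).1 (by rw [vB_succ_eq_tB]; exact summable_tB)

lemma tsum_vB_eq : ∑' m, vB m = ∑' m, tB m := by
  rw [Summable.tsum_eq_zero_add summable_vB]
  have h0 : vB 0 = 0 := by simp [vB, Hr]
  rw [h0, vB_succ_eq_tB, zero_add]

lemma sA_eq (m : ℕ) : sA m = vB m + 1 / ((m : ℝ) + 1) ^ 3 := by
  unfold sA vB
  rw [Hr_succ, add_div]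
  congr 1
  rw [div_div, ← pow_succ']


/-- Euler's identity ζ(2,1) = ζ(3): the double sum over pairs k > l ≥ 1 of
1/(k² l) equals the sum over k ≥ 1 of 1/k³. -/
theorem euler_zeta_two_one_eq_zeta_three :
    ∑' p : {p : ℕ × ℕ // p.2 < p.1 ∧ 1 ≤ p.2},
      (1 : ℝ) / ((p.1.1 : ℝ) ^ 2 * (p.1.2 : ℝ)) =
    ∑' k : {k : ℕ // 1 ≤ k}, (1 : ℝ) / (k : ℝ) ^ 3 := by
  set F : {p : ℕ × ℕ // p.2 < p.1 ∧ 1 ≤ p.2} → ℝ :=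
    fun p => (1 : ℝ) / ((p.1.1 : ℝ) ^ 2 * (p.1.2 : ℝ)) with hF
  have hFB : ∀ q : ℕ × ℕ, F (eProd q) = B q := by
    intro ⟨m, n⟩
    simp only [hF, eProd, Equiv.coe_fn_mk, B]
    push_cast
    ring_nf
  have hLHS_B : ∑' p, F p = ∑' q, B q := by
    rw [← eProd.tsum_eq F]
    exact tsum_congr hFB
  have hsummableF : Summable F :=
    (eProd.summable_iff (f := F)).1 (summable_B.congr fun q => (hFB q).symm)
  -- sigma decomposition
  have hsummableG : Summable (fun x : Σ m : ℕ, Fin (m + 1) => F (eSig x)) :=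
    (eSig.summable_iff (f := F)).2 hsummableF
  have hGval : ∀ (m : ℕ) (j : Fin (m + 1)),
      F (eSig ⟨m, j⟩) = 1 / ((m : ℝ) + 2) ^ 2 * (1 / ((j : ℝ) + 1)) := by
    intro m j
    simp only [hF, eSig, Equiv.coe_fn_mk]
    push_cast
    rw [one_div_mul_one_div]
  have hLHS_tB : ∑' p, F p = ∑' m, tB m := by
    rw [← eSig.tsum_eq F, Summable.tsum_sigma hsummableG]
    refine tsum_congr fun m => ?_
    rw [tsum_fintype]
    calc ∑ j : Fin (m + 1), F (eSig ⟨m, j⟩)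
        = ∑ j : Fin (m + 1), 1 / ((m : ℝ) + 2) ^ 2 * (1 / (((j : ℕ) : ℝ) + 1)) :=
          Finset.sum_congr rfl fun j _ => hGval m j
      _ = ∑ j ∈ range (m + 1), 1 / ((m : ℝ) + 2) ^ 2 * (1 / ((j : ℝ) + 1)) :=
          Fin.sum_univ_eq_sum_range (fun j => 1 / ((m : ℝ) + 2) ^ 2 * (1 / ((j : ℝ) + 1))) (m + 1)
      _ = 1 / ((m : ℝ) + 2) ^ 2 * Hr (m + 1) := by rw [← Finset.mul_sum]; rfl
      _ = tB m := by unfold tB; rw [one_div_mul_eq_div]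
  have hRHS : ∑' k : {k : ℕ // 1 ≤ k}, (1 : ℝ) / (k : ℝ) ^ 3
      = ∑' m : ℕ, 1 / ((m : ℝ) + 1) ^ 3 := by
    rw [← eNat.tsum_eq (fun k : {k : ℕ // 1 ≤ k} => (1 : ℝ) / (k : ℝ) ^ 3)]
    refine (tsum_congr fun n => ?_).symm
    simp only [eNat, Equiv.coe_fn_mk]
    push_cast
    ring_nf
  have h1 : ∑' m, sA m = (∑' m, vB m) + ∑' m : ℕ, 1 / ((m : ℝ) + 1) ^ 3 :=
    calc ∑' m, sA m = ∑' m : ℕ, (vB m + 1 / ((m : ℝ) + 1) ^ 3) := tsum_congr sA_eq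
      _ = _ := Summable.tsum_add summable_vB sum_inv_cube
  have hkey : ∑' q, B q = ∑' m : ℕ, 1 / ((m : ℝ) + 1) ^ 3 := by
    have e : 2 * ∑' q, B q = (∑' q, B q) + ∑' m : ℕ, 1 / ((m : ℝ) + 1) ^ 3 := by
      rw [← tsum_A_eq_two_B, tsum_A_eq, h1, tsum_vB_eq, ← hLHS_tB, hLHS_B]
    linarith
  rw [hLHS_B, hRHS, hkey]
end

section
/- The shuffle relation ζ(2,3) + 3ζ(3,2) + 6ζ(4,1) = ζ(2)ζ(3). -/
set_option maxHeartbeats 1000000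

/-- The single zeta value ζ(n) = ∑_{k ≥ 1} 1/kⁿ. -/
noncomputable def zeta1 (n : ℕ) : ℝ :=
  ∑' k : {k : ℕ // 1 ≤ k}, (1 : ℝ) / (k : ℝ) ^ n

/-- The double zeta value ζ(n₁,n₂) = ∑_{k > l ≥ 1} 1/(k^{n₁} l^{n₂}). -/
noncomputable def zeta2 (m n : ℕ) : ℝ :=
  ∑' p : {p : ℕ × ℕ // p.2 < p.1 ∧ 1 ≤ p.2},
    (1 : ℝ) / ((p.1.1 : ℝ) ^ m * (p.1.2 : ℝ) ^ n)

namespace ZetaShuffle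

abbrev S := {p : ℕ × ℕ // p.2 < p.1 ∧ 1 ≤ p.2}

/-- The summand of `zeta2 a b`. -/
noncomputable def F (a b : ℕ) (p : S) : ℝ :=
  (1 : ℝ) / ((p.1.1 : ℝ) ^ a * (p.1.2 : ℝ) ^ b)

lemma zeta2_eq (a b : ℕ) : zeta2 a b = ∑' p : S, F a b p := rfl

/-- The involution (N, k) ↦ (N, N - k) of `S`. -/
def e1 : S ≃ S where
  toFun p := ⟨(p.1.1, p.1.1 - p.1.2), by obtain ⟨⟨N, k⟩, h⟩ := p; simp only at *; omega⟩
  invFun p := ⟨(p.1.1, p.1.1 - p.1.2), by obtain ⟨⟨N, k⟩, h⟩ := p; simp only at *; omega⟩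
  left_inv p := by
    obtain ⟨⟨N, k⟩, h⟩ := p
    have h1 : k < N := h.1
    have h2 : 1 ≤ k := h.2
    apply Subtype.ext
    show (N, N - (N - k)) = (N, k)
    rw [Prod.mk.injEq]
    omega
  right_inv p := by
    obtain ⟨⟨N, k⟩, h⟩ := p
    have h1 : k < N := h.1
    have h2 : 1 ≤ k := h.2
    apply Subtype.ext
    show (N, N - (N - k)) = (N, k)
    rw [Prod.mk.injEq]
    omega

/-- The bijection (k, l) ↦ (k + l, k). -/
def e2 : ({k : ℕ // 1 ≤ k} × {l : ℕ // 1 ≤ l}) ≃ S where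
  toFun z := ⟨(z.1.1 + z.2.1, z.1.1), by
    obtain ⟨⟨k, hk⟩, ⟨l, hl⟩⟩ := z; refine ⟨?_, hk⟩; simp only; omega⟩
  invFun p := ⟨⟨p.1.2, p.2.2⟩, ⟨p.1.1 - p.1.2, by
    obtain ⟨⟨N, k⟩, h⟩ := p; simp only at *; omega⟩⟩
  left_inv z := by
    obtain ⟨⟨k, hk⟩, ⟨l, hl⟩⟩ := z
    refine Prod.ext (Subtype.ext ?_) (Subtype.ext ?_) <;> simp
  right_inv p := by
    obtain ⟨⟨N, k⟩, h⟩ := p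
    apply Subtype.ext
    refine Prod.ext ?_ rfl
    simp only at h ⊢; omega

lemma summable_base :
    Summable (fun p : ℕ × ℕ => (1 : ℝ) / (p.1 : ℝ) ^ 2 * (1 / (p.2 : ℝ) ^ 2)) := by
  have h : Summable (fun n : ℕ => 1 / (n : ℝ) ^ 2) :=
    Real.summable_one_div_nat_pow.mpr one_lt_two
  exact h.mul_of_nonneg h (fun n => by positivity) (fun n => by positivity)

lemma summable_F {a b : ℕ} (ha : 2 ≤ a) (hab : 4 ≤ a + b) : Summable (F a b) := by
  have hbase : Summable (fun p : S => (1 : ℝ) / ((p.1.1 : ℝ) ^ 2 * (p.1.2 : ℝ) ^ 2)) := by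
    have h := Summable.subtype summable_base {p : ℕ × ℕ | p.2 < p.1 ∧ 1 ≤ p.2}
    refine h.congr fun p => ?_
    simp only [Function.comp, one_div, mul_inv]
  refine Summable.of_nonneg_of_le (fun p => by unfold F; positivity) (fun p => ?_) hbase
  obtain ⟨⟨N, k⟩, hk, h1⟩ := p
  unfold F
  have hk0 : (0:ℝ) < (k:ℝ) := by exact_mod_cast h1
  have hN0 : (0:ℝ) < (N:ℝ) := by exact_mod_cast lt_of_le_of_lt (Nat.zero_le k) hk
  have hk1 : (1:ℝ) ≤ (k:ℝ) := by exact_mod_cast h1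
  have hkN : (k:ℝ) ≤ (N:ℝ) := by exact_mod_cast hk.le
  apply one_div_le_one_div_of_le (by positivity)
  calc (N:ℝ) ^ 2 * (k:ℝ) ^ 2 ≤ (N:ℝ) ^ 2 * (k:ℝ) ^ (a + b - 2) := by
        have hexp : (k:ℝ) ^ 2 ≤ (k:ℝ) ^ (a + b - 2) := pow_le_pow_right₀ hk1 (by omega)
        exact mul_le_mul_of_nonneg_left hexp (by positivity)
    _ = (N:ℝ) ^ 2 * ((k:ℝ) ^ (a - 2) * (k:ℝ) ^ b) := by
        rw [← pow_add]
        have hexp : a - 2 + b = a + b - 2 := by omega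
        rw [hexp]
    _ ≤ (N:ℝ) ^ 2 * ((N:ℝ) ^ (a - 2) * (k:ℝ) ^ b) := by gcongr
    _ = (N:ℝ) ^ a * (k:ℝ) ^ b := by
        rw [← mul_assoc, ← pow_add]
        have hexp : 2 + (a - 2) = a := by omega
        rw [hexp]

lemma tsum_G (a b : ℕ) :
    ∑' p : S, F a b (e1 p) = zeta2 a b := by
  rw [zeta2_eq]
  exact e1.tsum_eq (F a b)

/-- The key partial fraction identity. -/
lemma partial_fraction {N k : ℕ} (hk : k < N) (h1 : 1 ≤ k) :
    (1 : ℝ) / ((k : ℝ) ^ 2 * ((N - k : ℕ) : ℝ) ^ 3) =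
      1 / ((N : ℝ) ^ 3 * (k : ℝ) ^ 2) + 3 * (1 / ((N : ℝ) ^ 4 * (k : ℝ) ^ 1)) +
      1 / ((N : ℝ) ^ 2 * ((N - k : ℕ) : ℝ) ^ 3) +
      2 * (1 / ((N : ℝ) ^ 3 * ((N - k : ℕ) : ℝ) ^ 2)) +
      3 * (1 / ((N : ℝ) ^ 4 * ((N - k : ℕ) : ℝ) ^ 1)) := by
  have hk0 : (0:ℝ) < (k:ℝ) := by exact_mod_cast h1
  have hL0 : (0:ℝ) < ((N - k : ℕ) : ℝ) := by exact_mod_cast Nat.sub_pos_of_lt hk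
  have hNs : (N : ℝ) = (k : ℝ) + ((N - k : ℕ) : ℝ) := by
    have : ((N - k : ℕ) : ℝ) = (N : ℝ) - (k : ℝ) := by
      push_cast [Nat.cast_sub hk.le]; ring
    rw [this]; ring
  set K := (k : ℝ)
  set L := ((N - k : ℕ) : ℝ)
  rw [hNs]
  have hKL : (0:ℝ) < K + L := by linarith
  field_simp
  ring

end ZetaShuffle

open ZetaShuffle in
/-- The shuffle identity ζ(2,3) + 3ζ(3,2) + 6ζ(4,1) = ζ(2)ζ(3). -/
theorem zeta_two_three_shuffle :
    zeta2 2 3 + 3 * zeta2 3 2 + 6 * zeta2 4 1 = zeta1 2 * zeta1 3 := by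
  have hF32 : Summable (F 3 2) := summable_F (by norm_num) (by norm_num)
  have hF41 : Summable (F 4 1) := summable_F (by norm_num) (by norm_num)
  have hF23 : Summable (F 2 3) := summable_F (by norm_num) (by norm_num)
  have hG23 : Summable (fun p => F 2 3 (e1 p)) := hF23.comp_injective e1.injective
  have hG32 : Summable (fun p => F 3 2 (e1 p)) := hF32.comp_injective e1.injective
  have hG41 : Summable (fun p => F 4 1 (e1 p)) := hF41.comp_injective e1.injective
  have h2 : Summable (fun k : {k : ℕ // 1 ≤ k} => (1 : ℝ) / (k : ℝ) ^ 2) := by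
    have h : Summable (fun n : ℕ => 1 / (n : ℝ) ^ 2) :=
      Real.summable_one_div_nat_pow.mpr one_lt_two
    exact h.subtype _
  have h3 : Summable (fun k : {k : ℕ // 1 ≤ k} => (1 : ℝ) / (k : ℝ) ^ 3) := by
    have h : Summable (fun n : ℕ => 1 / (n : ℝ) ^ 3) :=
      Real.summable_one_div_nat_pow.mpr (by norm_num)
    exact h.subtype _
  have hprod : Summable (fun z : {k : ℕ // 1 ≤ k} × {l : ℕ // 1 ≤ l} =>
      (1 : ℝ) / (z.1 : ℝ) ^ 2 * (1 / (z.2 : ℝ) ^ 3)) :=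
    h2.mul_of_nonneg h3 (fun n => by positivity) (fun n => by positivity)
  have hmul : zeta1 2 * zeta1 3 = ∑' z : {k : ℕ // 1 ≤ k} × {l : ℕ // 1 ≤ l},
      (1 : ℝ) / (z.1 : ℝ) ^ 2 * (1 / (z.2 : ℝ) ^ 3) :=
    Summable.tsum_mul_tsum h2 h3 hprod
  have hcomp : ∀ z : {k : ℕ // 1 ≤ k} × {l : ℕ // 1 ≤ l},
      (1 : ℝ) / (z.1 : ℝ) ^ 2 * (1 / (z.2 : ℝ) ^ 3) =
      (fun p : S => (1 : ℝ) / ((p.1.2 : ℝ) ^ 2 * ((p.1.1 - p.1.2 : ℕ) : ℝ) ^ 3)) (e2 z) := by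
    rintro ⟨⟨k, hk⟩, ⟨l, hl⟩⟩
    show (1 : ℝ) / (k : ℝ) ^ 2 * (1 / (l : ℝ) ^ 3) =
      1 / ((k : ℝ) ^ 2 * (((k + l) - k : ℕ) : ℝ) ^ 3)
    rw [Nat.add_sub_cancel_left, div_mul_div_comm, one_mul]
  have hS : zeta1 2 * zeta1 3 =
      ∑' p : S, (1 : ℝ) / ((p.1.2 : ℝ) ^ 2 * ((p.1.1 - p.1.2 : ℕ) : ℝ) ^ 3) := by
    rw [hmul, ← e2.tsum_eq (fun p : S =>
      (1 : ℝ) / ((p.1.2 : ℝ) ^ 2 * ((p.1.1 - p.1.2 : ℕ) : ℝ) ^ 3))]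
    exact tsum_congr hcomp
  have hpt : ∀ p : S, (1 : ℝ) / ((p.1.2 : ℝ) ^ 2 * ((p.1.1 - p.1.2 : ℕ) : ℝ) ^ 3) =
      F 3 2 p + 3 * F 4 1 p + F 2 3 (e1 p) + 2 * F 3 2 (e1 p) + 3 * F 4 1 (e1 p) := by
    rintro ⟨⟨N, k⟩, hk, h1⟩
    have h := partial_fraction hk h1
    show (1 : ℝ) / ((k : ℝ) ^ 2 * ((N - k : ℕ) : ℝ) ^ 3) =
      1 / ((N : ℝ) ^ 3 * (k : ℝ) ^ 2) + 3 * (1 / ((N : ℝ) ^ 4 * (k : ℝ) ^ 1)) +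
      1 / ((N : ℝ) ^ 2 * ((N - k : ℕ) : ℝ) ^ 3) +
      2 * (1 / ((N : ℝ) ^ 3 * ((N - k : ℕ) : ℝ) ^ 2)) +
      3 * (1 / ((N : ℝ) ^ 4 * ((N - k : ℕ) : ℝ) ^ 1))
    exact h
  rw [hS, tsum_congr hpt]
  rw [Summable.tsum_add (((hF32.add (hF41.mul_left 3)).add hG23).add (hG32.mul_left 2)) (hG41.mul_left 3)]
  rw [Summable.tsum_add ((hF32.add (hF41.mul_left 3)).add hG23) (hG32.mul_left 2)]
  rw [Summable.tsum_add (hF32.add (hF41.mul_left 3)) hG23]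
  rw [Summable.tsum_add hF32 (hF41.mul_left 3)]
  rw [tsum_mul_left, tsum_mul_left, tsum_mul_left, tsum_G, tsum_G, tsum_G,
    ← zeta2_eq, ← zeta2_eq]
  ring
end
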